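/- The ordinary generating function of the sequence h_n (number of words of length n over {A,B,C,D} with no CB-factor) is H(x) = Σ_{n≥0} h_n x^n = 1/(1 − 4x + x²), as an identity of formal power series. -/

import Mathlib

inductive Letter | A | B | C | D
deriving DecidableEq

def NoCB (w : List Letter) : Prop :=
  List.Chain' (fun a b => ¬(a = Letter.C ∧ b = Letter.B)) w

noncomputable def hword (n : ℕ) : ℕ :=
  Nat.card {w : List Letter // w.length = n ∧ NoCB w}

instance : Fintype Letter :=
  ⟨{.A, .B, .C, .D}, by intro x; cases x <;> simp⟩

instance (n : ℕ) : Finite {l : List Letter // l.length = n} := by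
  refine Finite.of_injective
    (fun w => (fun i : Fin n => w.1.get (Fin.cast w.2.symm i))) ?_
  intro a b h
  apply Subtype.ext
  apply List.ext_get (a.2.trans b.2.symm)
  intro i h1 h2
  have := congrFun h (Fin.cast a.2 ⟨i, h1⟩)
  simpa using this

instance instFinS (n : ℕ) : Finite {w : List Letter // w.length = n ∧ NoCB w} := by
  refine Finite.of_injective
    (fun w => (⟨w.1, w.2.1⟩ : {l : List Letter // l.length = n})) (fun a b h => ?_)
  have h2 := congrArg Subtype.val h
  simp only at h2
  exact Subtype.ext h2

noncomputable def bword (n : ℕ) : ℕ :=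
  Nat.card {w : List Letter // w.length = n ∧ NoCB w ∧ w.head? = some Letter.B}

instance instFinT (n : ℕ) :
    Finite {w : List Letter // w.length = n ∧ NoCB w ∧ w.head? = some Letter.B} := by
  refine Finite.of_injective
    (fun w => (⟨w.1, w.2.1⟩ : {l : List Letter // l.length = n})) (fun a b h => ?_)
  have h2 := congrArg Subtype.val h
  simp only at h2
  exact Subtype.ext h2

lemma card_Letter : Nat.card Letter = 4 := by
  rw [Nat.card_eq_fintype_card]; decide

lemma hword_zero : hword 0 = 1 := by
  rw [hword, Nat.card_eq_one_iff_unique]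
  constructor
  · constructor
    intro a b
    apply Subtype.ext
    rw [List.length_eq_zero_iff.mp a.2.1, List.length_eq_zero_iff.mp b.2.1]
  · exact ⟨⟨[], rfl, List.isChain_nil⟩⟩

lemma hword_one : hword 1 = 4 := by
  rw [hword, ← card_Letter]
  refine (Nat.card_eq_of_bijective
    (fun a => (⟨[a], rfl, List.isChain_singleton a⟩ :
      {w : List Letter // w.length = 1 ∧ NoCB w})) ⟨?_, ?_⟩).symm
  · intro a b h
    simpa using congrArg Subtype.val h
  · rintro ⟨w, hw, _⟩
    obtain ⟨a, rfl⟩ := List.length_eq_one_iff.mp hw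
    exact ⟨a, rfl⟩

lemma bword_zero : bword 0 = 0 := by
  rw [bword, Nat.card_eq_zero]
  left
  constructor
  rintro ⟨w, hw, _, hh⟩
  rw [List.length_eq_zero_iff.mp hw] at hh
  simp at hh

lemma bword_succ (n : ℕ) : bword (n + 1) = hword n := by
  rw [bword, hword]
  refine (Nat.card_eq_of_bijective
    (fun w => (⟨Letter.B :: w.1, by simp [w.2.1], by
      rw [NoCB, List.Chain', List.isChain_cons]
      exact ⟨fun b _ h => by simp at h, w.2.2⟩, rfl⟩ :
        {w : List Letter // w.length = n + 1 ∧ NoCB w ∧ w.head? = some Letter.B}))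
    ⟨?_, ?_⟩).symm
  · intro a b h
    apply Subtype.ext
    simpa using congrArg Subtype.val h
  · rintro ⟨w, hw, hn, hh⟩
    cases w with
    | nil => simp at hh
    | cons a t =>
      simp only [List.head?_cons, Option.some.injEq] at hh
      subst hh
      exact ⟨⟨t, by simpa using hw, List.IsChain.tail hn⟩, rfl⟩

lemma hword_bword (n : ℕ) : hword (n + 1) + bword n = 4 * hword n := by
  classical
  set S := {w : List Letter // w.length = n ∧ NoCB w} with hS
  have key : Nat.card Letter * Nat.card S = Nat.card (Letter × S) := (Nat.card_prod _ _).symm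
  set bad : Letter × S → Prop :=
    fun p => p.1 = Letter.C ∧ (p.2 : List Letter).head? = some Letter.B with hbad
  have hsplit : Nat.card {p // bad p} + Nat.card {p // ¬ bad p} = Nat.card (Letter × S) := by
    rw [← Nat.card_sum]
    exact Nat.card_congr (Equiv.sumCompl bad)
  have hgood : Nat.card {p // ¬ bad p} = hword (n + 1) := by
    rw [hword]
    apply Nat.card_eq_of_bijective
      (fun p => (⟨p.1.1 :: (p.1.2 : List Letter), by simp [p.1.2.2.1], by
        rw [NoCB, List.Chain', List.isChain_cons]
        exact ⟨fun b hb hab => p.2 ⟨hab.1, by rw [hb, hab.2]⟩, p.1.2.2.2⟩⟩ :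
          {w : List Letter // w.length = n + 1 ∧ NoCB w}))
    constructor
    · rintro ⟨⟨a, w⟩, ha⟩ ⟨⟨b, v⟩, hb⟩ h
      have h' := congrArg Subtype.val h
      simp only [List.cons.injEq] at h'
      exact Subtype.ext (Prod.ext_iff.mpr ⟨h'.1, Subtype.ext h'.2⟩)
    · rintro ⟨w, hw, hn⟩
      cases w with
      | nil => simp at hw
      | cons a t =>
        refine ⟨⟨⟨a, ⟨t, by simpa using hw, List.IsChain.tail hn⟩⟩, ?_⟩, rfl⟩
        rintro ⟨rfl, hh⟩
        rw [NoCB, List.Chain', List.isChain_cons] at hn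
        exact hn.1 _ hh ⟨rfl, rfl⟩
  have hbadc : Nat.card {p // bad p} = bword n := by
    rw [bword]
    apply Nat.card_eq_of_bijective
      (fun p => (⟨(p.1.2 : List Letter), p.1.2.2.1, p.1.2.2.2, p.2.2⟩ :
        {w : List Letter // w.length = n ∧ NoCB w ∧ w.head? = some Letter.B}))
    constructor
    · rintro ⟨⟨a, w⟩, ha⟩ ⟨⟨b, v⟩, hb⟩ h
      have h' : (w : List Letter) = v := by
        have := congrArg Subtype.val h
        simpa using this
      exact Subtype.ext (Prod.ext_iff.mpr ⟨ha.1.trans hb.1.symm, Subtype.ext h'⟩)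
    · rintro ⟨w, hw, hn, hh⟩
      exact ⟨⟨⟨Letter.C, ⟨w, hw, hn⟩⟩, rfl, hh⟩, rfl⟩
  rw [← hgood, ← hbadc, Nat.add_comm, hsplit, ← key, card_Letter, hword]

lemma hword_rec (n : ℕ) : hword (n + 2) + hword n = 4 * hword (n + 1) := by
  rw [← bword_succ n, hword_bword (n + 1)]

lemma hword_rec_q (n : ℕ) :
    (hword (n + 2) : ℚ) - 4 * hword (n + 1) + hword n = 0 := by
  have h := hword_rec n
  have : ((hword (n + 2) + hword n : ℕ) : ℚ) = ((4 * hword (n + 1) : ℕ) : ℚ) := by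
    exact congrArg (fun k : ℕ => (k : ℚ)) h
  push_cast at this
  linarith

open PowerSeries in
/-- The ordinary generating function of h_n is 1/(1 - 4x + x²). -/
theorem stmt2 :
    PowerSeries.mk (fun n => (hword n : ℚ)) = (1 - 4 * PowerSeries.X + PowerSeries.X ^ 2)⁻¹ := by
  set F := PowerSeries.mk fun n => (hword n : ℚ) with hF
  set G : PowerSeries ℚ := 1 - 4 * PowerSeries.X + PowerSeries.X ^ 2 with hG
  have hc : PowerSeries.constantCoeff G ≠ 0 := by
    simp [hG, map_sub, map_add]
  have hFG : F * G = 1 := by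
    have expand : F * G = F - (PowerSeries.C 4) * (F * X) + (F * X) * X := by
      have h4 : (PowerSeries.C) 4 = (4 : PowerSeries ℚ) := map_ofNat _ 4
      rw [hG, h4]; ring
    ext n
    rw [expand]
    match n with
    | 0 =>
      simp [hF, hword_zero]
    | 1 =>
      simp [hF, coeff_succ_mul_X, hword_zero, hword_one]
    | (n + 2) =>
      have h2 : (coeff (n + 2)) ((F * X) * X) = coeff n F := by
        rw [coeff_succ_mul_X, coeff_succ_mul_X]
      simp only [map_add, map_sub, coeff_C_mul, coeff_succ_mul_X, h2, coeff_one, hF,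
        coeff_mk]
      have := hword_rec_q n
      simp only [Nat.add_eq, if_neg (by omega : ¬ n + 2 = 0)]
      linarith
  have hGi : G * G⁻¹ = 1 := PowerSeries.mul_inv_cancel _ hc
  calc F = F * (G * G⁻¹) := by rw [hGi, mul_one]
    _ = (F * G) * G⁻¹ := by ring
    _ = G⁻¹ := by rw [hFG, one_mul]
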